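/- (Weak law of large numbers for triangular arrays of row-wise exchangeable random variables.) Let kₙ → ∞ and for each n let X_{1,n}, …, X_{kₙ,n} be real square-integrable, row-wise exchangeable random variables; set ρₙ := E[X_{1,n} X_{2,n}] (so E[X_{i,n} X_{j,n}] = ρₙ for all i ≠ j) and assume E[X_{1,n}²] ≤ Γ for some finite Γ and all n. Let (a_{i,n}) be real numbers such that limₙ Σ_{i=1}^{kₙ} a_{i,n}² = 0 and limₙ |ρₙ| · (Σ_{i=1}^{kₙ} |a_{i,n}|)² = 0. Then Σ_{i=1}^{kₙ} a_{i,n} X_{i,n} → 0 in probability as n → ∞. -/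

import Mathlib

open MeasureTheory Filter Set

noncomputable section

lemma integrable_mul_of_memL2 {α : Type*} [MeasurableSpace α] {μ : Measure α}
    {f g : α → ℝ} (hf : MemLp f 2 μ) (hg : MemLp g 2 μ) :
    Integrable (fun x => f x * g x) μ := by
  refine Integrable.mono' (hf.integrable_sq.add hg.integrable_sq)
    (hf.aestronglyMeasurable.mul hg.aestronglyMeasurable) ?_
  filter_upwards with x
  simp only [Pi.add_apply]
  rw [Real.norm_eq_abs, abs_mul]
  nlinarith [sq_abs (f x), sq_abs (g x), abs_nonneg (f x), abs_nonneg (g x),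
    sq_nonneg (|f x| - |g x|)]

/-- weak law of large numbers for triangular arrays of row-wise exchangeable
square-integrable random variables. -/
theorem wlln_exchangeable_triangular_array
    {Ω : ℕ → Type*} [∀ n, MeasurableSpace (Ω n)]
    (P : ∀ n, Measure (Ω n)) (hP : ∀ n, IsProbabilityMeasure (P n))
    (k : ℕ → ℕ) (hk : Tendsto k atTop atTop)
    (X : ∀ n, Fin (k n) → Ω n → ℝ)
    (hmeas : ∀ n i, Measurable (X n i))
    -- row-wise exchangeability
    (hexch : ∀ n (σ : Equiv.Perm (Fin (k n))),
      Measure.map (fun ω => fun i => X n (σ i) ω) (P n) =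
        Measure.map (fun ω => fun i => X n i ω) (P n))
    -- square integrability with uniformly bounded second moment
    (hL2 : ∀ n i, MemLp (X n i) 2 (P n))
    (Γ : ℝ) (hΓ : ∀ n i, ∫ ω, (X n i ω) ^ 2 ∂(P n) ≤ Γ)
    -- common cross-moment ρₙ = E[X_{i,n} X_{j,n}] for i ≠ j
    (ρ : ℕ → ℝ)
    (hρ : ∀ n (i j : Fin (k n)), i ≠ j → ∫ ω, X n i ω * X n j ω ∂(P n) = ρ n)
    -- the weights
    (a : ∀ n, Fin (k n) → ℝ)
    (ha1 : Tendsto (fun n : ℕ => ∑ i, (a n i) ^ 2) atTop (nhds 0))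
    (ha2 : Tendsto (fun n : ℕ => |ρ n| * (∑ i, |a n i|) ^ 2) atTop (nhds 0)) :
    ∀ η > (0 : ℝ),
      Tendsto (fun n : ℕ => P n {ω | η < |∑ i, a n i * X n i ω|}) atTop (nhds 0) := by
  intro η hη
  have hη2 : (0:ℝ) < η ^ 2 := by positivity
  set A : ℕ → ℝ := fun n => ∑ i, (a n i) ^ 2 with hAdef
  set C : ℕ → ℝ := fun n => |ρ n| * (∑ i, |a n i|) ^ 2 with hCdef
  -- second moment bound
  have key : ∀ n, ∫ ω, (∑ i, a n i * X n i ω) ^ 2 ∂(P n) ≤ Γ * A n + 2 * C n := by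
    intro n
    set E : Fin (k n) → Fin (k n) → ℝ := fun i j => ∫ ω, X n i ω * X n j ω ∂(P n) with hEdef
    have hint : ∀ i j : Fin (k n), Integrable (fun ω => X n i ω * X n j ω) (P n) :=
      fun i j => integrable_mul_of_memL2 (hL2 n i) (hL2 n j)
    have hexp : ∀ ω, (∑ i, a n i * X n i ω) ^ 2
        = ∑ i, ∑ j, (a n i * a n j) * (X n i ω * X n j ω) := by
      intro ω
      rw [sq, Finset.sum_mul_sum]
      exact Finset.sum_congr rfl fun i _ => Finset.sum_congr rfl fun j _ => by ring
    have hI : ∫ ω, (∑ i, a n i * X n i ω) ^ 2 ∂(P n)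
        = ∑ i, ∑ j, a n i * a n j * E i j := by
      simp_rw [hexp]
      rw [integral_finset_sum _ (fun i _ =>
        integrable_finset_sum _ (fun j _ => (hint i j).const_mul _))]
      refine Finset.sum_congr rfl fun i _ => ?_
      rw [integral_finset_sum _ (fun j _ => (hint i j).const_mul _)]
      exact Finset.sum_congr rfl fun j _ => integral_const_mul _ _
    have hrho : ρ n * (∑ i, a n i) ^ 2 = ∑ i : Fin (k n), ∑ j : Fin (k n),
        a n i * a n j * ρ n := by
      rw [sq, Finset.sum_mul_sum, Finset.mul_sum]
      refine Finset.sum_congr rfl fun i _ => ?_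
      rw [Finset.mul_sum]
      exact Finset.sum_congr rfl fun j _ => by ring
    have inner : ∀ i : Fin (k n), ∑ j, a n i * a n j * E i j
        = (a n i) ^ 2 * (E i i - ρ n) + ∑ j, a n i * a n j * ρ n := by
      intro i
      have h1 : ∀ j, a n i * a n j * E i j
          = a n i * a n j * (E i j - ρ n) + a n i * a n j * ρ n := fun j => by ring
      simp_rw [h1]
      rw [Finset.sum_add_distrib]
      congr 1
      rw [Finset.sum_eq_single i]
      · ring
      · intro j _ hj
        rw [hEdef]
        simp only
        rw [hρ n i j (Ne.symm hj)]
        ring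
      · intro h; exact absurd (Finset.mem_univ i) h
    have hsplit : ∑ i, ∑ j, a n i * a n j * E i j
        = (∑ i, (a n i) ^ 2 * (E i i - ρ n)) + ρ n * (∑ i, a n i) ^ 2 := by
      rw [hrho, ← Finset.sum_add_distrib]
      exact Finset.sum_congr rfl fun i _ => inner i
    -- bounds
    have hEii : ∀ i : Fin (k n), E i i ≤ Γ := by
      intro i
      have : (fun ω => X n i ω * X n i ω) = fun ω => (X n i ω) ^ 2 := by
        funext ω; ring
      rw [hEdef]; simp only; rw [this]; exact hΓ n i
    have hb1 : ∑ i, (a n i) ^ 2 * (E i i - ρ n) ≤ (Γ + |ρ n|) * A n := by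
      rw [hAdef]
      simp only
      rw [Finset.mul_sum]
      refine Finset.sum_le_sum fun i _ => ?_
      have h1 : E i i - ρ n ≤ Γ + |ρ n| := by
        have := hEii i
        have := neg_abs_le (ρ n)
        linarith
      have := sq_nonneg (a n i)
      nlinarith
    have hb2 : ρ n * (∑ i, a n i) ^ 2 ≤ C n := by
      rw [hCdef]
      simp only
      have h1 : (∑ i, a n i) ^ 2 ≤ (∑ i, |a n i|) ^ 2 := by
        rw [← sq_abs (∑ i, a n i)]
        exact pow_le_pow_left₀ (abs_nonneg _) (Finset.abs_sum_le_sum_abs _ _) 2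
      have h2 : ρ n ≤ |ρ n| := le_abs_self _
      nlinarith [abs_nonneg (ρ n), sq_nonneg (∑ i, a n i), sq_nonneg (∑ i, |a n i|)]
    have hb3 : A n ≤ (∑ i, |a n i|) ^ 2 := by
      rw [hAdef]
      simp only
      rw [sq, Finset.sum_mul]
      refine Finset.sum_le_sum fun i _ => ?_
      rw [sq, ← abs_mul_abs_self]
      exact mul_le_mul_of_nonneg_left
        (Finset.single_le_sum (fun j _ => abs_nonneg (a n j)) (Finset.mem_univ i))
        (abs_nonneg _)
    have hb4 : |ρ n| * A n ≤ C n := by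
      rw [hCdef]
      exact mul_le_mul_of_nonneg_left hb3 (abs_nonneg _)
    rw [hI, hsplit]
    nlinarith
  -- Chebyshev
  have cheb : ∀ n, P n {ω | η < |∑ i, a n i * X n i ω|}
      ≤ ENNReal.ofReal ((Γ * A n + 2 * C n) / η ^ 2) := by
    intro n
    haveI := hP n
    set S : Ω n → ℝ := fun ω => ∑ i, a n i * X n i ω with hSdef
    have hS2int : Integrable (fun ω => S ω ^ 2) (P n) := by
      have : MemLp S 2 (P n) := by
        exact memLp_finset_sum _ (fun i _ => (hL2 n i).const_mul _)
      exact this.integrable_sq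
    have hmono : P n {ω | η < |S ω|} ≤ P n {ω | η ^ 2 ≤ S ω ^ 2} := by
      apply measure_mono
      intro ω hω
      simp only [Set.mem_setOf_eq] at *
      calc η ^ 2 ≤ |S ω| ^ 2 := pow_le_pow_left₀ hη.le hω.le 2
        _ = S ω ^ 2 := sq_abs _
    have hmarkov := mul_meas_ge_le_integral_of_nonneg
      (μ := P n) (f := fun ω => S ω ^ 2)
      (Filter.Eventually.of_forall fun ω => sq_nonneg _) hS2int (η ^ 2)
    have hItop : P n {ω | η ^ 2 ≤ S ω ^ 2} ≠ ⊤ := measure_ne_top _ _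
    have hIle : (P n {ω | η ^ 2 ≤ S ω ^ 2}).toReal
        ≤ (Γ * A n + 2 * C n) / η ^ 2 := by
      rw [le_div_iff₀ hη2]
      calc (P n {ω | η ^ 2 ≤ S ω ^ 2}).toReal * η ^ 2
          = η ^ 2 * (P n {ω | η ^ 2 ≤ S ω ^ 2}).toReal := by ring
        _ ≤ ∫ ω, S ω ^ 2 ∂(P n) := hmarkov
        _ ≤ Γ * A n + 2 * C n := key n
    have hnn : 0 ≤ Γ * A n + 2 * C n :=
      le_trans (integral_nonneg fun ω => sq_nonneg (S ω)) (key n)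
    calc P n {ω | η < |S ω|} ≤ P n {ω | η ^ 2 ≤ S ω ^ 2} := hmono
      _ ≤ ENNReal.ofReal ((Γ * A n + 2 * C n) / η ^ 2) :=
        (ENNReal.le_ofReal_iff_toReal_le hItop
          (div_nonneg hnn hη2.le)).mpr hIle
  -- squeeze; note the bound can be negative, so use ofReal which is monotone-safe
  have hBnd : Tendsto (fun n => ENNReal.ofReal ((Γ * A n + 2 * C n) / η ^ 2)) atTop (nhds 0) := by
    have h1 : Tendsto (fun n => (Γ * A n + 2 * C n) / η ^ 2) atTop (nhds 0) := by
      have h2 : Tendsto (fun n => Γ * A n + 2 * C n) atTop (nhds 0) := by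
        have := (ha1.const_mul Γ).add (ha2.const_mul 2)
        simpa using this
      simpa using h2.div_const (η ^ 2)
    have := (ENNReal.continuous_ofReal.tendsto 0).comp h1
    simpa [Function.comp_def] using this
  refine tendsto_of_tendsto_of_tendsto_of_le_of_le tendsto_const_nhds hBnd
    (fun n => zero_le) (fun n => cheb n)
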